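/- Let ū ∈ H¹(ℝ) and define ȳ : ℝ → ℝ implicitly by ∫₀^{ȳ(ξ)} (1 + ū_x(x)²) dx = ξ. Then ȳ is well-defined (the map y ↦ ∫₀^y (1+ū_x²) is a strictly increasing bijection of ℝ), ȳ is Lipschitz with constant 1, strictly increasing, and differentiable almost everywhere with ȳ'(ξ) = 1/(1 + ū_x(ȳ(ξ))²) for a.e. ξ. -/

import Mathlib

open Real Set MeasureTheory intervalIntegral

/-- The Bressan–Constantin change of variables: for `ū ∈ H¹(ℝ)` with weak derivative
`ūx ∈ L²(ℝ)`, the map `y ↦ ∫₀^y (1 + ūx²)` is a strictly increasing bijection of `ℝ`,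
and its inverse `ȳ` (defined by `∫₀^{ȳ(ξ)}(1 + ūx²) = ξ`) is `1`-Lipschitz, strictly
increasing, and a.e. differentiable with `ȳ'(ξ) = 1/(1 + ūx(ȳ(ξ))²)`. -/
theorem change_of_variables_ybar
    (ubarx : ℝ → ℝ)
    (hmeas : Measurable ubarx)
    (hL2 : MeasureTheory.MemLp ubarx 2 (volume : Measure ℝ)) :
    (StrictMono fun y : ℝ => ∫ x in (0:ℝ)..y, (1 + (ubarx x)^2)) ∧
    (Function.Bijective fun y : ℝ => ∫ x in (0:ℝ)..y, (1 + (ubarx x)^2)) ∧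
    ∃ ybar : ℝ → ℝ,
      (∀ ξ : ℝ, (∫ x in (0:ℝ)..(ybar ξ), (1 + (ubarx x)^2)) = ξ) ∧
      LipschitzWith 1 ybar ∧ StrictMono ybar ∧
      (∀ᵐ ξ : ℝ, HasDerivAt ybar (1 / (1 + (ubarx (ybar ξ))^2)) ξ) := by
  set g : ℝ → ℝ := fun x => 1 + (ubarx x)^2 with hgdef
  set F : ℝ → ℝ := fun y => ∫ x in (0:ℝ)..y, g x with hFdef
  have hg1 : ∀ x, (1:ℝ) ≤ g x := fun x => le_add_of_nonneg_right (sq_nonneg _)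
  have hg0 : ∀ x, (0:ℝ) ≤ g x := fun x => le_trans zero_le_one (hg1 x)
  have hgmeas : Measurable g := measurable_const.add (hmeas.pow_const 2)
  have hgint : ∀ a b : ℝ, IntervalIntegrable g volume a b := fun a b =>
    intervalIntegrable_const.add hL2.integrable_sq.intervalIntegrable
  have hFsub : ∀ a b : ℝ, F b - F a = ∫ x in a..b, g x := fun a b =>
    integral_interval_sub_left (hgint 0 b) (hgint 0 a)
  have hgap : ∀ a b : ℝ, a ≤ b → b - a ≤ F b - F a := by
    intro a b hab
    rw [hFsub a b]
    calc b - a = ∫ _x in a..b, (1:ℝ) := by simp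
      _ ≤ ∫ x in a..b, g x :=
        integral_mono_on hab intervalIntegrable_const (hgint a b) fun x _ => hg1 x
  have hFmono : StrictMono F := by
    intro a b hab
    have := hgap a b hab.le
    linarith
  have hFcont : Continuous F := intervalIntegral.continuous_primitive hgint 0
  have hF0 : F 0 = 0 := integral_same
  have hFtop : Filter.Tendsto F Filter.atTop Filter.atTop := by
    refine Filter.tendsto_atTop_mono' Filter.atTop ?_ Filter.tendsto_id
    filter_upwards [Filter.eventually_ge_atTop (0:ℝ)] with y hy
    have := hgap 0 y hy
    simp only [id]
    linarith
  have hFbot : Filter.Tendsto F Filter.atBot Filter.atBot := by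
    refine Filter.tendsto_atBot_mono' Filter.atBot ?_ Filter.tendsto_id
    filter_upwards [Filter.eventually_le_atBot (0:ℝ)] with y hy
    have := hgap y 0 hy
    simp only [id]
    linarith
  have hFbij : Function.Bijective F :=
    ⟨hFmono.injective, Continuous.surjective hFcont hFtop hFbot⟩
  set e := Equiv.ofBijective F hFbij with he
  set ybar : ℝ → ℝ := fun ξ => e.symm ξ with hybar
  have hFy : ∀ ξ, F (ybar ξ) = ξ := fun ξ => e.apply_symm_apply ξ
  have key : ∀ a b : ℝ, ybar a ≤ ybar b → |ybar a - ybar b| ≤ |a - b| := by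
    intro a b h
    have hab : a ≤ b := by
      have := hFmono.monotone h
      rwa [hFy, hFy] at this
    have h2 := hgap _ _ h
    rw [hFy, hFy] at h2
    rw [abs_of_nonpos (by linarith), abs_of_nonpos (by linarith)]
    linarith
  have hylip : LipschitzWith 1 ybar := by
    refine LipschitzWith.of_dist_le_mul fun ξ₁ ξ₂ => ?_
    rw [NNReal.coe_one, one_mul, Real.dist_eq, Real.dist_eq]
    rcases le_total (ybar ξ₁) (ybar ξ₂) with h | h
    · exact key _ _ h
    · rw [abs_sub_comm, abs_sub_comm ξ₁]
      exact key _ _ h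
  have hysm : StrictMono ybar := by
    intro a b hab
    rw [← hFmono.lt_iff_lt, hFy, hFy]
    exact hab
  set S : StieltjesFunction ℝ :=
    ⟨F, hFmono.monotone, fun x => hFcont.continuousAt.continuousWithinAt⟩ with hSdef
  set μ : Measure ℝ := volume.withDensity (fun x => ENNReal.ofReal (g x)) with hμdef
  have hSμ : S.measure = μ := by
    refine Measure.ext_of_Ioc _ _ fun a b hab => ?_
    rw [S.measure_Ioc, hμdef, withDensity_apply _ measurableSet_Ioc]
    have h1 : F b - F a = ∫ x in Ioc a b, g x := by
      rw [hFsub a b, intervalIntegral.integral_of_le hab.le]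
    rw [h1, ofReal_integral_eq_lintegral_ofReal (hgint a b).1 (ae_of_all _ hg0)]
  have hderivF : ∀ᵐ y, HasDerivAt F (g y) y := by
    have h1 := S.ae_hasDerivAt
    have h2 : (fun x => Measure.rnDeriv S.measure volume x)
        =ᵐ[volume] fun x => ENNReal.ofReal (g x) := by
      rw [hSμ]
      exact Measure.rnDeriv_withDensity volume hgmeas.ennreal_ofReal
    filter_upwards [h1, h2] with y h1y h2y
    rw [h2y, ENNReal.toReal_ofReal (hg0 y)] at h1y
    exact h1y
  have hymeas : Measurable ybar := hylip.continuous.measurable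
  have hmap : Measure.map ybar volume = S.measure := by
    refine (Measure.ext_of_Ioc S.measure _ fun a b hab => ?_).symm
    rw [Measure.map_apply hymeas measurableSet_Ioc, S.measure_Ioc]
    have hpre : ybar ⁻¹' Ioc a b = Ioc (F a) (F b) := by
      ext ξ
      simp only [mem_preimage, mem_Ioc]
      constructor
      · rintro ⟨h1, h2⟩
        exact ⟨by rw [← hFy ξ]; exact hFmono h1,
          by rw [← hFy ξ]; exact hFmono.monotone h2⟩
      · rintro ⟨h1, h2⟩
        rw [← hFy ξ] at h1 h2
        exact ⟨hFmono.lt_iff_lt.mp h1, hFmono.le_iff_le.mp h2⟩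
    rw [hpre, Real.volume_Ioc]
  have hac : μ ≪ (volume : Measure ℝ) := withDensity_absolutelyContinuous _ _
  have hderivμ : ∀ᵐ y ∂(Measure.map ybar volume), HasDerivAt F (g y) y := by
    rw [hmap, hSμ]
    exact hac.ae_le hderivF
  have hae : ∀ᵐ ξ, HasDerivAt F (g (ybar ξ)) (ybar ξ) :=
    MeasureTheory.ae_of_ae_map hymeas.aemeasurable hderivμ
  refine ⟨hFmono, hFbij, ybar, fun ξ => hFy ξ, hylip, hysm, ?_⟩
  filter_upwards [hae] with ξ hξ
  have hne : g (ybar ξ) ≠ 0 := by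
    have := hg1 (ybar ξ)
    linarith
  have h := HasDerivAt.of_local_left_inverse hylip.continuous.continuousAt hξ hne
    (Filter.Eventually.of_forall hFy)
  rw [one_div]
  exact h
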